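/- arXiv:math/0305213 — 2 statements merged into one kernel-verified Lean document; each statement's English description precedes it below -/
import Mathlib

section
/- If a consistent, computably axiomatized formal theory proves only true statements of the form 'C(x) ≥ m', then there is a constant N (depending on the theory) such that the theory proves no statement 'C(x) ≥ m' with m > N, even though such true statements exist for every m. -/
/-- Chaitin's information-theoretic incompleteness theorem.  Let `U` be a
universal machine (every partial computable function is simulated by `U` with
constant overhead), and let `Provable x m` express that a fixed formal theory
proves the statement `C(x) ≥ m`.  If the theory is sound for such statements
(whatever it proves is true for `U`-complexity) and its theorems are
computably enumerable, then there is a constant `N` such that no statement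
`C(x) ≥ m` with `m > N` is provable. -/
theorem chaitin_incompleteness
    (U : List Bool →. List Bool) (hU : Partrec U)
    (huniv : ∀ g : List Bool →. List Bool, Partrec g →
      ∃ c : ℕ, ∀ p x, x ∈ g p → ∃ q : List Bool, x ∈ U q ∧ q.length ≤ p.length + c)
    (Provable : List Bool → ℕ → Prop)
    (hsound : ∀ x m, Provable x m → ∀ p : List Bool, x ∈ U p → m ≤ p.length)
    (hce : ∃ f : ℕ → Option (List Bool × ℕ), Computable f ∧
      ∀ x m, (Provable x m ↔ ∃ k, f k = some (x, m))) :
    ∃ N : ℕ, ∀ x m, Provable x m → m ≤ N := by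
  obtain ⟨f, hf, hfP⟩ := hce
  -- The search function: on input `p`, look for a provable statement `C(x) ≥ m`
  -- with `m ≥ 2 * p.length`, and output the witness `x`.
  set F : List Bool → ℕ → Option (List Bool) := fun a k =>
    (f k).bind fun xm => cond (decide (2 * a.length ≤ xm.2)) (some xm.1) none with hFdef
  have hFc : Computable₂ F := by
    apply Computable.option_bind (hf.comp Computable.snd)
    apply Computable.cond
    · exact (Primrec.nat_le.comp
          (Primrec.nat_mul.comp (Primrec.const 2)
            (Primrec.list_length.comp (Primrec.fst.comp Primrec.fst)))
          (Primrec.snd.comp Primrec.snd)).decide.to_comp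
    · exact Computable.option_some.comp (Computable.fst.comp Computable.snd)
    · exact Computable.const none
  have hg : Partrec fun a => Nat.rfindOpt (F a) := Partrec.rfindOpt hFc
  obtain ⟨c, hc⟩ := huniv _ hg
  refine ⟨2 * c + 1, fun x m hxm => ?_⟩
  by_contra hgt
  push_neg at hgt
  -- take `p` of length `c + 1`
  set p : List Bool := List.replicate (c + 1) true with hp
  have hplen : p.length = c + 1 := List.length_replicate
  obtain ⟨k, hk⟩ := (hfP x m).1 hxm
  have hFk : x ∈ F p k := by
    simp only [hFdef, hk, Option.bind_some]
    have : 2 * p.length ≤ m := by omega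
    simp [this]
  have hdom : (Nat.rfindOpt (F p)).Dom := Nat.rfindOpt_dom.2 ⟨k, x, hFk⟩
  obtain ⟨y, hy⟩ := Part.dom_iff_mem.1 hdom
  obtain ⟨n, hn⟩ := Nat.rfindOpt_spec hy
  -- unpack hn : y ∈ F p n
  simp only [hFdef, Option.mem_def, Option.bind_eq_some_iff] at hn
  obtain ⟨⟨x', m'⟩, hfn, hcond⟩ := hn
  have hle : 2 * p.length ≤ m' ∧ y = x' := by
    by_cases h : 2 * p.length ≤ m' <;> simp [h] at hcond
    · exact ⟨h, hcond.symm⟩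
  obtain ⟨hm', heq⟩ := hle
  subst heq
  have hprov : Provable y m' := (hfP y m').2 ⟨n, hfn⟩
  obtain ⟨q, hq, hqlen⟩ := hc p y hy
  have := hsound y m' hprov q hq
  omega
end

section
/- Kraft's inequality: if D is a prefix-free set of finite binary strings, then ∑_{p ∈ D} 2^{-|p|} ≤ 1. -/
/-- A set of binary strings is prefix-free if no element is a proper prefix
of another. -/
def PrefixFree (D : Set (List Bool)) : Prop :=
  ∀ p ∈ D, ∀ q ∈ D, p <+: q → p = q

lemma kraft_fin : ∀ (n : ℕ) (S : Finset (List Bool)),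
    (∀ p ∈ S, ∀ q ∈ S, p <+: q → p = q) → (∀ p ∈ S, p.length ≤ n) →
    ∑ p ∈ S, ((2 : ℝ) ^ p.length)⁻¹ ≤ 1 := by
  intro n
  induction n with
  | zero =>
    intro S _ hlen
    have hsub : S ⊆ {([] : List Bool)} := by
      intro p hp
      simp only [Finset.mem_singleton]
      exact List.eq_nil_of_length_eq_zero (Nat.le_zero.mp (hlen p hp))
    calc ∑ p ∈ S, ((2 : ℝ) ^ p.length)⁻¹
        ≤ ∑ p ∈ {([] : List Bool)}, ((2 : ℝ) ^ p.length)⁻¹ := by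
          apply Finset.sum_le_sum_of_subset_of_nonneg hsub
          intro i _ _; positivity
      _ = 1 := by simp
  | succ n ih =>
    intro S hpf hlen
    by_cases hnil : ([] : List Bool) ∈ S
    · have hsub : S ⊆ {([] : List Bool)} := by
        intro p hp
        simp only [Finset.mem_singleton]
        exact (hpf [] hnil p hp (List.nil_prefix)).symm
      calc ∑ p ∈ S, ((2 : ℝ) ^ p.length)⁻¹
          ≤ ∑ p ∈ {([] : List Bool)}, ((2 : ℝ) ^ p.length)⁻¹ := by
            apply Finset.sum_le_sum_of_subset_of_nonneg hsub
            intro i _ _; positivity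
        _ = 1 := by simp
    · -- split by first bit
      have key : ∀ b : Bool,
          ∑ p ∈ S.filter (fun p => p.head? = some b), ((2 : ℝ) ^ p.length)⁻¹ ≤ 1 / 2 := by
        intro b
        set Sb := S.filter (fun p => p.head? = some b) with hSb
        have hcons : ∀ p ∈ Sb, p = b :: p.tail := by
          intro p hp
          rcases Finset.mem_filter.mp hp with ⟨_, hh⟩
          cases p with
          | nil => simp at hh
          | cons a t => simp at hh; simp [hh]
        set T := Sb.image List.tail with hT
        have hinj : Set.InjOn List.tail (Sb : Set (List Bool)) := by
          intro p hp q hq htail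
          rw [hcons p hp, hcons q hq, htail]
        have hTpf : ∀ p ∈ T, ∀ q ∈ T, p <+: q → p = q := by
          intro p hp q hq hpre
          rcases Finset.mem_image.mp hp with ⟨p', hp', rfl⟩
          rcases Finset.mem_image.mp hq with ⟨q', hq', rfl⟩
          have hp'S := (Finset.mem_filter.mp hp').1
          have hq'S := (Finset.mem_filter.mp hq').1
          have : p' <+: q' := by
            rw [hcons p' hp', hcons q' hq']
            exact List.cons_prefix_cons.mpr ⟨rfl, hpre⟩
          rw [hpf p' hp'S q' hq'S this]
        have hTlen : ∀ p ∈ T, p.length ≤ n := by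
          intro p hp
          rcases Finset.mem_image.mp hp with ⟨p', hp', rfl⟩
          have := hlen p' (Finset.mem_filter.mp hp').1
          have hl : p'.length = p'.tail.length + 1 := by
            conv_lhs => rw [hcons p' hp']
            simp
          omega
        have hsum : ∑ p ∈ Sb, ((2 : ℝ) ^ p.length)⁻¹
            = (1 / 2) * ∑ q ∈ T, ((2 : ℝ) ^ q.length)⁻¹ := by
          rw [hT, Finset.sum_image (fun x hx y hy h => hinj hx hy h), Finset.mul_sum]
          apply Finset.sum_congr rfl
          intro p hp
          have hl : p.length = p.tail.length + 1 := by
            conv_lhs => rw [hcons p hp]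
            simp
          rw [hl]
          ring
        rw [hsum]
        have := ih T hTpf hTlen
        nlinarith
      have hsplit : S = (S.filter (fun p => p.head? = some false)) ∪
          (S.filter (fun p => p.head? = some true)) := by
        ext p
        simp only [Finset.mem_union, Finset.mem_filter]
        constructor
        · intro hp
          cases p with
          | nil => exact absurd hp hnil
          | cons a t => cases a <;> simp [hp]
        · rintro (⟨h, _⟩ | ⟨h, _⟩) <;> exact h
      have hdisj : Disjoint (S.filter (fun p => p.head? = some false))
          (S.filter (fun p => p.head? = some true)) := by
        rw [Finset.disjoint_left]
        intro p hp hq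
        have h1 := (Finset.mem_filter.mp hp).2
        have h2 := (Finset.mem_filter.mp hq).2
        rw [h1] at h2
        exact absurd h2 (by simp)
      calc ∑ p ∈ S, ((2 : ℝ) ^ p.length)⁻¹
          = ∑ p ∈ S.filter (fun p => p.head? = some false), ((2 : ℝ) ^ p.length)⁻¹
            + ∑ p ∈ S.filter (fun p => p.head? = some true), ((2 : ℝ) ^ p.length)⁻¹ := by
            conv_lhs => rw [hsplit]
            exact Finset.sum_union hdisj
        _ ≤ 1 / 2 + 1 / 2 := add_le_add (key false) (key true)
        _ = 1 := by norm_num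

/-- Kraft's inequality: if `D` is a prefix-free set of finite binary strings,
then `∑_{p ∈ D} 2^{-|p|} ≤ 1`. -/
theorem kraft_inequality (D : Set (List Bool)) (hD : PrefixFree D) :
    ∑' p : D, ((2 : ℝ) ^ (p : List Bool).length)⁻¹ ≤ 1 := by
  by_cases hs : Summable (fun p : D => ((2 : ℝ) ^ (p : List Bool).length)⁻¹)
  · apply Summable.tsum_le_of_sum_le hs
    intro s
    have : ∑ p ∈ s, ((2 : ℝ) ^ (p : List Bool).length)⁻¹
        = ∑ p ∈ s.image (fun x : D => (x : List Bool)), ((2 : ℝ) ^ p.length)⁻¹ := by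
      rw [Finset.sum_image]
      intro x _ y _ h
      exact Subtype.ext h
    rw [this]
    apply kraft_fin ((s.image (fun x : D => (x : List Bool))).sup List.length)
    · intro p hp q hq hpre
      rcases Finset.mem_image.mp hp with ⟨p', _, rfl⟩
      rcases Finset.mem_image.mp hq with ⟨q', _, rfl⟩
      exact hD p' p'.2 q' q'.2 hpre
    · intro p hp
      exact Finset.le_sup hp
  · rw [tsum_eq_zero_of_not_summable hs]
    norm_num
end
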